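/- Define r(t) = θ(1-α)·A·l̄^α·(Λ₀/(1+(Λ₀-1)t))^α on [0,1], where Λ₀ = (αθ)^{1/(1-α)}. Then r is strictly decreasing in t if θ > 1/α and strictly increasing in t if θ < 1/α (and constant if θ = 1/α). -/
import Mathlib


open Real Set

theorem stmt7 (α θ A lb : ℝ) (hα : α ∈ Ioo (0:ℝ) 1) (hθ : 0 < θ)
    (hA : 0 < A) (hl : 0 < lb)
    (Λ : ℝ) (hΛ : Λ = (α * θ) ^ ((1:ℝ)/(1-α))) :
    (1/α < θ →
      StrictAntiOn (fun t : ℝ => θ * (1-α) * A * lb ^ α * (Λ / (1 + (Λ - 1) * t)) ^ α)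
        (Icc 0 1)) ∧
    (θ < 1/α →
      StrictMonoOn (fun t : ℝ => θ * (1-α) * A * lb ^ α * (Λ / (1 + (Λ - 1) * t)) ^ α)
        (Icc 0 1)) ∧
    (θ = 1/α →
      ∀ t ∈ Icc (0:ℝ) 1, ∀ s ∈ Icc (0:ℝ) 1,
        θ * (1-α) * A * lb ^ α * (Λ / (1 + (Λ - 1) * t)) ^ α =
        θ * (1-α) * A * lb ^ α * (Λ / (1 + (Λ - 1) * s)) ^ α) := by
  obtain ⟨hα0, hα1⟩ := hα
  have h1α : 0 < 1 - α := by linarith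
  have hexp : 0 < (1:ℝ)/(1-α) := by positivity
  have hΛpos : 0 < Λ := hΛ ▸ Real.rpow_pos_of_pos (by positivity) _
  have hc : 0 < θ * (1-α) * A * lb ^ α := by positivity
  have key : ∀ t ∈ Icc (0:ℝ) 1, 0 < 1 + (Λ - 1) * t := by
    rintro t ⟨ht0, ht1⟩
    rcases le_or_gt 1 Λ with h | h
    · nlinarith
    · nlinarith
  refine ⟨?_, ?_, ?_⟩
  · intro hθ'
    have hΛ1 : 1 < Λ := by
      have h1 : 1 < α * θ := by
        rw [div_lt_iff₀ hα0] at hθ'; linarith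
      calc (1:ℝ) = 1 ^ ((1:ℝ)/(1-α)) := (Real.one_rpow _).symm
        _ < (α*θ) ^ ((1:ℝ)/(1-α)) := Real.rpow_lt_rpow (by norm_num) h1 hexp
        _ = Λ := hΛ.symm
    intro t ht s hs hts
    have hdt := key t ht
    have hds := key s hs
    have hg : Λ / (1 + (Λ-1)*s) < Λ / (1 + (Λ-1)*t) := by
      apply div_lt_div_of_pos_left hΛpos hdt
      nlinarith
    have hgs : 0 ≤ Λ / (1 + (Λ-1)*s) := by positivity
    have hpow := Real.rpow_lt_rpow hgs hg hα0
    exact mul_lt_mul_of_pos_left hpow hc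
  · intro hθ'
    have hΛ1 : Λ < 1 := by
      have h1 : α * θ < 1 := by
        rw [lt_div_iff₀ hα0] at hθ'; linarith
      calc Λ = (α*θ) ^ ((1:ℝ)/(1-α)) := hΛ
        _ < 1 ^ ((1:ℝ)/(1-α)) := Real.rpow_lt_rpow (by positivity) h1 hexp
        _ = 1 := Real.one_rpow _
    intro t ht s hs hts
    have hdt := key t ht
    have hds := key s hs
    have hg : Λ / (1 + (Λ-1)*t) < Λ / (1 + (Λ-1)*s) := by
      apply div_lt_div_of_pos_left hΛpos hds
      nlinarith
    have hgs : 0 ≤ Λ / (1 + (Λ-1)*t) := by positivity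
    have hpow := Real.rpow_lt_rpow hgs hg hα0
    exact mul_lt_mul_of_pos_left hpow hc
  · intro hθ'
    have hαθ : α * θ = 1 := by
      rw [hθ']; field_simp
    have hΛ1 : Λ = 1 := by rw [hΛ, hαθ, Real.one_rpow]
    intro t _ s _
    simp [hΛ1]
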